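/- arXiv:2205.07280 — 2 statements merged into one kernel-verified Lean document; each statement's English description precedes it below -/
import Mathlib

section
/- For 0 < c < 1, the contour integral (1/(4i)) ∮_{|z|=1} log|1 − √c z|² · (2cz − √c(z² + 1)) / ((z − √c)(1 − √c z) z) dz equals −π log(1 − c). -/
open Complex Metric Set intervalIntegral

lemma circle_inv_integral (g : ℂ → ℂ) :
    (∮ z in C((0:ℂ), 1), g z⁻¹ / z ^ 2) = ∮ z in C((0:ℂ), 1), g z := by
  have hper : Function.Periodic
      (fun θ : ℝ => Complex.exp (θ * Complex.I) * Complex.I * g (Complex.exp (θ * Complex.I)))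
      (2 * Real.pi) := by
    intro θ
    have : Complex.exp ((↑(θ + 2 * Real.pi)) * Complex.I) = Complex.exp (θ * Complex.I) := by
      push_cast
      rw [add_mul, Complex.exp_add]
      simp [Complex.exp_two_pi_mul_I]
    simp only [this]
  have key : ∀ θ : ℝ, Complex.exp (θ * Complex.I) * Complex.I *
      (g ((Complex.exp (θ * Complex.I))⁻¹) / (Complex.exp (θ * Complex.I)) ^ 2)
      = Complex.exp ((-θ : ℝ) * Complex.I) * Complex.I * g (Complex.exp ((-θ : ℝ) * Complex.I)) := by
    intro θ
    have h1 : (Complex.exp (θ * Complex.I))⁻¹ = Complex.exp ((-θ : ℝ) * Complex.I) := by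
      rw [← Complex.exp_neg]; push_cast; ring_nf
    have h2 : Complex.exp (θ * Complex.I) ≠ 0 := Complex.exp_ne_zero _
    have h4 : Complex.exp (↑θ * Complex.I) / Complex.exp (↑θ * Complex.I) ^ 2
        = Complex.exp (↑(-θ) * Complex.I) := by
      rw [sq, div_mul_eq_div_div, div_self h2, one_div, h1]
    have h5 : Complex.exp (↑θ * Complex.I) * Complex.I *
        (g (Complex.exp (↑(-θ) * Complex.I)) / Complex.exp (↑θ * Complex.I) ^ 2)
        = (Complex.exp (↑θ * Complex.I) / Complex.exp (↑θ * Complex.I) ^ 2) * Complex.I *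
          g (Complex.exp (↑(-θ) * Complex.I)) := by ring
    rw [h1, h5, h4]
  simp only [circleIntegral, deriv_circleMap, circleMap, ofReal_one, one_mul, zero_add,
    smul_eq_mul]
  calc (∫ θ in (0:ℝ)..2 * Real.pi, Complex.exp (θ * Complex.I) * Complex.I *
          (g ((Complex.exp (θ * Complex.I))⁻¹) / (Complex.exp (θ * Complex.I)) ^ 2))
      = ∫ θ in (0:ℝ)..2 * Real.pi, Complex.exp ((-θ:ℝ) * Complex.I) * Complex.I *
          g (Complex.exp ((-θ:ℝ) * Complex.I)) := by
        apply intervalIntegral.integral_congr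
        intro θ _
        exact key θ
    _ = ∫ θ in -(2 * Real.pi)..-(0:ℝ), Complex.exp ((θ:ℝ) * Complex.I) * Complex.I *
          g (Complex.exp ((θ:ℝ) * Complex.I)) := by
        rw [← intervalIntegral.integral_comp_neg
          (fun θ : ℝ => Complex.exp ((θ:ℝ) * Complex.I) * Complex.I * g (Complex.exp ((θ:ℝ) * Complex.I)))]
    _ = ∫ θ in (0:ℝ)..2 * Real.pi, Complex.exp (θ * Complex.I) * Complex.I *
          g (Complex.exp (θ * Complex.I)) := by
        have := hper.intervalIntegral_add_eq (-(2 * Real.pi)) 0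
        simp only [neg_add_cancel, zero_add] at this
        rw [neg_zero, this]

set_option maxHeartbeats 2000000 in
lemma circleIntegral_add' {f g : ℂ → ℂ} (hf : CircleIntegrable f 0 1)
    (hg : CircleIntegrable g 0 1) :
    (∮ z in C((0:ℂ), 1), (f z + g z))
      = (∮ z in C((0:ℂ), 1), f z) + ∮ z in C((0:ℂ), 1), g z := by
  simp only [circleIntegral, smul_add, intervalIntegral.integral_add hf.out hg.out]

/-- For `0 < c < 1`,
`(1/(4i)) ∮_{|z|=1} log|1 − √c z|² · (2cz − √c(z²+1)) / ((z − √c)(1 − √c z) z) dz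
  = −π log(1 − c)`. -/
theorem stmt_4 (c : ℝ) (hc0 : 0 < c) (hc1 : c < 1) :
    (1 / (4 * Complex.I)) *
      (∮ z in C((0 : ℂ), 1),
        (Real.log (‖1 - (Real.sqrt c : ℂ) * z‖ ^ 2) : ℂ) *
          (2 * (c : ℂ) * z - (Real.sqrt c : ℂ) * (z ^ 2 + 1)) /
          ((z - (Real.sqrt c : ℂ)) * (1 - (Real.sqrt c : ℂ) * z) * z))
      = -(Real.pi : ℂ) * (Real.log (1 - c) : ℂ) := by
  set a : ℝ := Real.sqrt c with ha_def
  have ha0 : 0 < a := Real.sqrt_pos.mpr hc0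
  have haa : a * a = c := Real.mul_self_sqrt hc0.le
  have ha1 : a < 1 := by nlinarith
  set A : ℂ := ((a : ℝ) : ℂ) with hA_def
  have hAabs : ‖A‖ = a := by
    rw [hA_def, Complex.norm_real, Real.norm_eq_abs, abs_of_pos ha0]
  have hcA : (c : ℂ) = A * A := by rw [hA_def]; exact_mod_cast haa.symm
  -- positivity of real part on the closed ball
  have hre : ∀ z : ℂ, ‖z‖ ≤ 1 → 0 < (1 - A * z).re := by
    intro z hz
    have h1 : |(A * z).re| ≤ ‖A * z‖ := Complex.abs_re_le_norm _
    have h2 : ‖A * z‖ ≤ a := by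
      rw [norm_mul, hAabs]; nlinarith
    have h3 := abs_le.mp (h1.trans h2)
    simp only [Complex.sub_re, Complex.one_re]
    linarith [h3.2]
  have hslit : ∀ z : ℂ, ‖z‖ ≤ 1 → (1 - A * z) ∈ Complex.slitPlane :=
    fun z hz => Or.inl (hre z hz)
  have hne : ∀ z : ℂ, ‖z‖ ≤ 1 → 1 - A * z ≠ 0 := by
    intro z hz h
    have := hre z hz
    rw [h] at this; simp at this
  set F : ℂ → ℂ := fun z => Complex.log (1 - A * z) with hF_def
  set R : ℂ → ℂ := fun z =>
    (2 * (c : ℂ) * z - A * (z ^ 2 + 1)) / ((z - A) * (1 - A * z) * z) with hR_def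
  -- sphere facts
  have sphere_abs : ∀ z ∈ sphere (0:ℂ) 1, ‖z‖ = 1 := by
    intro z hz
    exact mem_sphere_zero_iff_norm.mp hz
  have hz0 : ∀ z ∈ sphere (0:ℂ) 1, z ≠ 0 := by
    intro z hz h
    have := sphere_abs z hz; rw [h] at this; simp at this
  have hzA : ∀ z ∈ sphere (0:ℂ) 1, z - A ≠ 0 := by
    intro z hz h
    rw [sub_eq_zero] at h
    have := sphere_abs z hz
    rw [h, hAabs] at this
    linarith
  have h1Az : ∀ z ∈ sphere (0:ℂ) 1, 1 - A * z ≠ 0 := fun z hz =>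
    hne z (le_of_eq (sphere_abs z hz))
  -- differentiability of F on the closed ball
  have hFd : ∀ z ∈ closedBall (0:ℂ) 1, DifferentiableAt ℂ F z := by
    intro z hz
    have hzle : ‖z‖ ≤ 1 := by
      exact mem_closedBall_zero_iff.mp hz
    exact (Complex.differentiableAt_log (hslit z hzle)).comp z
      ((differentiableAt_const _).sub ((differentiableAt_const _).mul differentiableAt_id))
  have hFcont : ContinuousOn F (sphere (0:ℂ) 1) := fun z hz =>
    ((hFd z (sphere_subset_closedBall hz)).continuousAt).continuousWithinAt
  have hRcont : ContinuousOn R (sphere (0:ℂ) 1) := by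
    apply ContinuousOn.div
    · fun_prop
    · fun_prop
    · intro z hz
      exact mul_ne_zero (mul_ne_zero (hzA z hz) (h1Az z hz)) (hz0 z hz)
  have hFicont : ContinuousOn (fun z => F z⁻¹) (sphere (0:ℂ) 1) := by
    intro z hz
    have habs : ‖z⁻¹‖ ≤ 1 := by rw [norm_inv, sphere_abs z hz]; norm_num
    refine ContinuousAt.continuousWithinAt ?_
    have hinner : ContinuousAt (fun w : ℂ => 1 - A * w⁻¹) z :=
      continuousAt_const.sub (continuousAt_const.mul (continuousAt_inv₀ (hz0 z hz)))
    exact ContinuousAt.comp (g := Complex.log) (f := fun w : ℂ => 1 - A * w⁻¹)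
      (continuousAt_clog (hslit _ habs)) hinner
  -- key values of F
  have hF0 : F 0 = 0 := by simp [hF_def]
  have hFA : F A = ((Real.log (1 - c) : ℝ) : ℂ) := by
    have h1 : (1 : ℂ) - A * A = ((1 - c : ℝ) : ℂ) := by
      rw [← hcA]; push_cast; ring
    rw [hF_def]
    simp only []
    rw [h1, Complex.ofReal_log (by linarith : (0:ℝ) ≤ 1 - c)]
  -- Cauchy integral formula pieces
  have hI1 : (∮ z in C((0:ℂ), 1), (z - 0)⁻¹ • F z) = (2 * Real.pi * Complex.I : ℂ) • F 0 := by
    refine Complex.circleIntegral_sub_inv_smul_of_differentiable_on_off_countable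
      (s := ∅) countable_empty (by simp) ?_ ?_
    · exact fun z hz => (hFd z hz).continuousAt.continuousWithinAt
    · exact fun x hx => hFd x (ball_subset_closedBall hx.1)
  have hI2 : (∮ z in C((0:ℂ), 1), (z - A)⁻¹ • F z) = (2 * Real.pi * Complex.I : ℂ) • F A := by
    refine Complex.circleIntegral_sub_inv_smul_of_differentiable_on_off_countable
      (s := ∅) countable_empty ?_ ?_ ?_
    · rw [mem_ball_zero_iff]
      exact hAabs.le.trans_lt ha1
    · exact fun z hz => (hFd z hz).continuousAt.continuousWithinAt
    · exact fun x hx => hFd x (ball_subset_closedBall hx.1)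
  have hGd : ∀ z ∈ closedBall (0:ℂ) 1,
      DifferentiableAt ℂ (fun z => A * (1 - A * z)⁻¹ * F z) z := by
    intro z hz
    have hzle : ‖z‖ ≤ 1 := by
      exact mem_closedBall_zero_iff.mp hz
    refine DifferentiableAt.mul ?_ (hFd z hz)
    exact ((differentiableAt_const A).mul
      (((differentiableAt_const _).sub ((differentiableAt_const _).mul
        differentiableAt_id)).inv (hne z hzle)))
  have hI3 : (∮ z in C((0:ℂ), 1), A * (1 - A * z)⁻¹ * F z) = 0 := by
    refine Complex.circleIntegral_eq_zero_of_differentiable_on_off_countable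
      zero_le_one (s := ∅) countable_empty ?_ ?_
    · exact fun z hz => (hGd z hz).continuousAt.continuousWithinAt
    · exact fun x hx => hGd x (ball_subset_closedBall hx.1)
  -- integrability
  have hint1 : CircleIntegrable (fun z => F z * R z) 0 1 :=
    (hFcont.mul hRcont).circleIntegrable zero_le_one
  have hint2 : CircleIntegrable (fun z => F z⁻¹ * R z) 0 1 :=
    (hFicont.mul hRcont).circleIntegrable zero_le_one
  have hint3 : CircleIntegrable (fun z => (z - 0)⁻¹ • F z) 0 1 := by
    apply ContinuousOn.circleIntegrable zero_le_one
    exact (((continuousOn_id.sub continuousOn_const).inv₀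
      (fun z hz => by simpa using hz0 z hz)).smul hFcont)
  have hint4 : CircleIntegrable (fun z => (z - A)⁻¹ • F z) 0 1 := by
    apply ContinuousOn.circleIntegrable zero_le_one
    exact (((continuousOn_id.sub continuousOn_const).inv₀
      (fun z hz => by simpa using hzA z hz)).smul hFcont)
  have hint5 : CircleIntegrable (fun z => A * (1 - A * z)⁻¹ * F z) 0 1 := by
    apply ContinuousOn.circleIntegrable zero_le_one
    exact ((continuousOn_const.mul ((continuousOn_const.sub
      (continuousOn_const.mul continuousOn_id)).inv₀ (h1Az))).mul hFcont)
  -- value of ∮ F * R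
  have hI0 : (∮ z in C((0:ℂ), 1), F z * R z)
      = -(2 * Real.pi * Complex.I) * ((Real.log (1 - c) : ℝ) : ℂ) := by
    have hsplit : (∮ z in C((0:ℂ), 1), F z * R z)
        = ∮ z in C((0:ℂ), 1),
            ((z - 0)⁻¹ • F z - (z - A)⁻¹ • F z - A * (1 - A * z)⁻¹ * F z) := by
      apply circleIntegral.integral_congr zero_le_one
      intro z hz
      have h0 := hz0 z hz
      have hA' := hzA z hz
      have h1' := h1Az z hz
      simp only [smul_eq_mul, sub_zero, hR_def, hcA]
      field_simp
      ring
    have hint34 : CircleIntegrable (fun z => (z - (0:ℂ))⁻¹ • F z - (z - A)⁻¹ • F z) 0 1 := by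
      apply ContinuousOn.circleIntegrable zero_le_one
      exact ((((continuousOn_id.sub continuousOn_const).inv₀
        (fun z hz => by simpa using hz0 z hz)).smul hFcont).sub
        (((continuousOn_id.sub continuousOn_const).inv₀
        (fun z hz => by simpa using hzA z hz)).smul hFcont))
    rw [hsplit, circleIntegral.integral_sub hint34 hint5,
      circleIntegral.integral_sub hint3 hint4, hI1, hI2, hI3, hF0, hFA]
    simp only [smul_eq_mul, mul_zero, zero_sub, sub_zero]
    ring
  -- the inversion step
  have hI0' : (∮ z in C((0:ℂ), 1), F z⁻¹ * R z)
      = ∮ z in C((0:ℂ), 1), F z * R z := by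
    rw [← circle_inv_integral (fun z => F z⁻¹ * R z)]
    apply circleIntegral.integral_congr zero_le_one
    intro z hz
    have h0 := hz0 z hz
    have hA' := hzA z hz
    have h1' := h1Az z hz
    have habsz := sphere_abs z hz
    have hiA : z⁻¹ - A ≠ 0 := by
      intro h
      rw [sub_eq_zero] at h
      have : ‖z⁻¹‖ = 1 := by rw [norm_inv, habsz]; norm_num
      rw [h, hAabs] at this
      linarith
    have h1iA : 1 - A * z⁻¹ ≠ 0 := by
      apply hne
      rw [norm_inv, habsz]; norm_num
    simp only [inv_inv]
    have hD : (z - A) * (1 - A * z) * z ≠ 0 := mul_ne_zero (mul_ne_zero hA' h1') h0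
    have hD' : (z⁻¹ - A) * (1 - A * z⁻¹) * z⁻¹ ≠ 0 :=
      mul_ne_zero (mul_ne_zero hiA h1iA) (inv_ne_zero h0)
    have hRR : R z⁻¹ = z ^ 2 * R z := by
      rw [hR_def]
      simp only []
      rw [← mul_div_assoc, div_eq_div_iff hD' hD]
      field_simp
      ring
    rw [hRR, mul_comm (z ^ 2) (R z), ← mul_assoc, mul_div_assoc,
      div_self (pow_ne_zero 2 h0), mul_one]
  -- value of the full integral
  have htot : (∮ z in C((0 : ℂ), 1),
        (Real.log (‖1 - A * z‖ ^ 2) : ℂ) *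
          (2 * (c : ℂ) * z - A * (z ^ 2 + 1)) /
          ((z - A) * (1 - A * z) * z))
      = -(4 * Real.pi * Complex.I) * ((Real.log (1 - c) : ℝ) : ℂ) := by
    have hsplit : (∮ z in C((0 : ℂ), 1),
        (Real.log (‖1 - A * z‖ ^ 2) : ℂ) *
          (2 * (c : ℂ) * z - A * (z ^ 2 + 1)) /
          ((z - A) * (1 - A * z) * z))
        = ∮ z in C((0:ℂ), 1), (F z * R z + F z⁻¹ * R z) := by
      apply circleIntegral.integral_congr zero_le_one
      intro z hz
      have habsz := sphere_abs z hz
      have hL : ((Real.log (‖1 - A * z‖ ^ 2) : ℝ) : ℂ) = F z + F z⁻¹ := by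
        have hconj : (starRingEnd ℂ) z = z⁻¹ := (Complex.inv_eq_conj habsz).symm
        have hcw : 1 - A * z⁻¹ = (starRingEnd ℂ) (1 - A * z) := by
          rw [map_sub, map_one, map_mul, hconj, hA_def, Complex.conj_ofReal]
        have hargne : (1 - A * z).arg ≠ Real.pi := by
          intro h
          have h2 := hre z habsz.le
          have h3 := Complex.arg_eq_pi_iff.mp h
          linarith [h3.1]
        rw [hF_def]
        simp only []
        rw [hcw, Complex.log_conj _ hargne, Complex.add_conj, Complex.log_re]
        rw [Real.log_pow]
        push_cast
        ring
      simp only []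
      rw [mul_div_assoc, hL]
      show (F z + F z⁻¹) * R z = F z * R z + F z⁻¹ * R z
      ring
    rw [hsplit, circleIntegral_add' hint1 hint2, hI0', hI0]
    ring
  rw [htot]
  have hIne : Complex.I ≠ 0 := Complex.I_ne_zero
  field_simp
end

section
/- For c ∈ (0,1), ∫₀^{2π} log(1 + c − 2√c cos θ)/(1 + c − 2√c cos θ) · (c − √c cos θ) dθ = −2π log(1 − c). -/
open Complex Metric intervalIntegral

/-- Cauchy integral formula on the circle of radius `r`, rewritten as a `θ`-integral. -/
lemma aux_circle_stmt7 (r : ℝ) (hr0 : 0 < r) (w : ℂ) (hw : w ∈ ball (0:ℂ) r)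
    (f : ℂ → ℂ) (hf : DifferentiableOn ℂ f (closedBall 0 r)) :
    ∫ θ in (0:ℝ)..(2 * Real.pi),
        (circleMap 0 r θ - w)⁻¹ * f (circleMap 0 r θ) * circleMap 0 r θ
      = 2 * Real.pi * f w := by
  have hd : DiffContOnCl ℂ f (ball (0:ℂ) r) := by
    refine DifferentiableOn.diffContOnCl ?_
    rwa [closure_ball (0:ℂ) (ne_of_gt hr0)]
  have h := hd.circleIntegral_sub_inv_smul hw
  rw [circleIntegral] at h
  simp only [deriv_circleMap, smul_eq_mul] at h
  have h2 : I * ∫ θ in (0:ℝ)..(2 * Real.pi),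
      (circleMap 0 r θ - w)⁻¹ * f (circleMap 0 r θ) * circleMap 0 r θ
      = 2 * Real.pi * I * f w := by
    rw [← intervalIntegral.integral_const_mul, ← h]
    congr 1; ext θ; ring
  refine mul_left_cancel₀ I_ne_zero ?_
  rw [h2]; ring

/-- For `c ∈ (0,1)`,
`∫₀^{2π} log(1 + c − 2√c cos θ)/(1 + c − 2√c cos θ) · (c − √c cos θ) dθ = −2π log(1 − c)`. -/
theorem stmt_7 (c : ℝ) (hc0 : 0 < c) (hc1 : c < 1) :
    ∫ θ in (0 : ℝ)..(2 * Real.pi),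
      Real.log (1 + c - 2 * Real.sqrt c * Real.cos θ) /
        (1 + c - 2 * Real.sqrt c * Real.cos θ) * (c - Real.sqrt c * Real.cos θ)
      = -2 * Real.pi * Real.log (1 - c) := by
  set r : ℝ := Real.sqrt c with hrdef
  have hr0 : 0 < r := Real.sqrt_pos.mpr hc0
  have hr2 : r ^ 2 = c := Real.sq_sqrt hc0.le
  have hr1 : r < 1 := by nlinarith
  -- basic facts about the circle map
  have habs : ∀ θ : ℝ, ‖circleMap 0 r θ‖ = r := by
    intro θ; rw [norm_circleMap_zero, abs_of_pos hr0]
  have hz0 : ∀ θ : ℝ, circleMap 0 r θ ≠ 0 := by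
    intro θ h
    have := habs θ
    rw [h] at this
    simp at this
    exact hr0.ne' this.symm
  have hre : ∀ θ : ℝ, (1 - circleMap 0 r θ).re = 1 - r * Real.cos θ := by
    intro θ; simp [circleMap]
  have him : ∀ θ : ℝ, (1 - circleMap 0 r θ).im = -(r * Real.sin θ) := by
    intro θ; simp [circleMap]
  have hrepos : ∀ θ : ℝ, 0 < (1 - circleMap 0 r θ).re := by
    intro θ; rw [hre]
    nlinarith [Real.cos_le_one θ, Real.neg_one_le_cos θ]
  have hslit : ∀ θ : ℝ, (1 - circleMap 0 r θ) ∈ Complex.slitPlane :=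
    fun θ => Complex.mem_slitPlane_iff.mpr (Or.inl (hrepos θ))
  have hne : ∀ θ : ℝ, (1 : ℂ) - circleMap 0 r θ ≠ 0 := by
    intro θ h
    have := hrepos θ
    rw [h] at this; simp at this
  have hD : ∀ θ : ℝ, Complex.normSq (1 - circleMap 0 r θ) = 1 + c - 2 * r * Real.cos θ := by
    intro θ
    rw [Complex.normSq_apply, hre, him]
    nlinarith [Real.sin_sq_add_cos_sq θ]
  have hDpos : ∀ θ : ℝ, 0 < 1 + c - 2 * r * Real.cos θ := by
    intro θ; rw [← hD]; exact Complex.normSq_pos.mpr (hne θ)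
  -- the complex-valued function whose real part is the integrand
  set L : ℝ → ℂ := fun θ => Complex.log (1 - circleMap 0 r θ) with hL
  set B : ℝ → ℂ := fun θ => (1 - circleMap 0 r θ)⁻¹ with hB
  set G : ℝ → ℂ := fun θ =>
    2 * L θ - L θ * B θ - L θ * (starRingEnd ℂ) (B θ) with hG
  have key : ∀ θ : ℝ,
      Real.log (1 + c - 2 * r * Real.cos θ) /
        (1 + c - 2 * r * Real.cos θ) * (c - r * Real.cos θ) = (G θ).re := by
    intro θ
    have hlog : Real.log (1 + c - 2 * r * Real.cos θ) = 2 * (L θ).re := by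
      rw [hL]
      simp only [Complex.log_re]
      rw [← hD θ, Complex.normSq_eq_norm_sq, Real.log_pow]
      push_cast; ring
    have hBre : (B θ).re = (1 - r * Real.cos θ) / (1 + c - 2 * r * Real.cos θ) := by
      rw [hB]
      simp only [Complex.inv_re]
      rw [hre, hD]
    have hGre : (G θ).re = 2 * (L θ).re * (1 - (B θ).re) := by
      simp only [hG, Complex.sub_re, Complex.mul_re, Complex.conj_re, Complex.conj_im,
        Complex.ofReal_re, Complex.mul_im]
      simp [Complex.mul_re]
      ring
    have h0 := (hDpos θ).ne'
    have hstep : (1 : ℝ) - (1 - r * Real.cos θ) / (1 + c - 2 * r * Real.cos θ)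
        = (c - r * Real.cos θ) / (1 + c - 2 * r * Real.cos θ) := by
      rw [eq_div_iff h0, sub_mul, div_mul_cancel₀ _ h0]
      ring
    rw [hGre, hBre, hlog, hstep]
    ring
  have hcongr : (∫ θ in (0:ℝ)..(2 * Real.pi),
      Real.log (1 + c - 2 * r * Real.cos θ) /
        (1 + c - 2 * r * Real.cos θ) * (c - r * Real.cos θ))
      = ∫ θ in (0:ℝ)..(2 * Real.pi), (G θ).re :=
    intervalIntegral.integral_congr fun θ _ => key θ
  rw [hcongr]
  -- continuity and integrability
  have hzc : Continuous fun θ : ℝ => (1 : ℂ) - circleMap 0 r θ :=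
    continuous_const.sub (continuous_circleMap 0 r)
  have hLc : Continuous L := hzc.clog hslit
  have hBc : Continuous B := hzc.inv₀ hne
  have hLBc : Continuous fun θ => L θ * B θ := hLc.mul hBc
  have hLBbc : Continuous fun θ => L θ * (starRingEnd ℂ) (B θ) :=
    hLc.mul (Complex.continuous_conj.comp hBc)
  have hGc : Continuous G := by
    refine ((continuous_const.mul hLc).sub hLBc).sub hLBbc
  have hGint : IntervalIntegrable G MeasureTheory.volume 0 (2 * Real.pi) :=
    hGc.intervalIntegrable _ _
  -- pass to the complex integral
  have hreint : (∫ θ in (0:ℝ)..(2 * Real.pi), (G θ).re)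
      = (∫ θ in (0:ℝ)..(2 * Real.pi), G θ).re := by
    have := Complex.reCLM.intervalIntegral_comp_comm hGint
    simpa using this
  rw [hreint]
  -- differentiability of the relevant holomorphic functions
  have hball : ∀ z : ℂ, z ∈ closedBall (0:ℂ) r → (1 - z) ∈ Complex.slitPlane := by
    intro z hz
    rw [mem_closedBall, dist_zero_right] at hz
    refine Complex.mem_slitPlane_iff.mpr (Or.inl ?_)
    have h1 : z.re ≤ ‖z‖ := Complex.re_le_norm z
    have h2 : ‖z‖ ≤ r := hz
    simp only [Complex.sub_re, Complex.one_re]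
    linarith
  have hballne : ∀ z : ℂ, z ∈ closedBall (0:ℂ) r → (1 : ℂ) - z ≠ 0 :=
    fun z hz => Complex.slitPlane_ne_zero (hball z hz)
  have hdiff1 : DifferentiableOn ℂ (fun z => Complex.log (1 - z)) (closedBall 0 r) := by
    intro z hz
    exact (((differentiable_const (1:ℂ)).sub differentiable_id).differentiableAt.clog
      (hball z hz)).differentiableWithinAt
  have hdiff2 : DifferentiableOn ℂ (fun z => Complex.log (1 - z) * (1 - z)⁻¹)
      (closedBall 0 r) := by
    intro z hz
    refine DifferentiableAt.differentiableWithinAt ?_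
    refine DifferentiableAt.mul ?_ ?_
    · exact ((differentiable_const (1:ℂ)).sub differentiable_id).differentiableAt.clog
        (hball z hz)
    · exact (((differentiable_const (1:ℂ)).sub differentiable_id).differentiableAt).inv
        (hballne z hz)
  -- the three circle integrals
  have h0mem : (0 : ℂ) ∈ ball (0:ℂ) r := by simpa using hr0
  have hcmem : ((c : ℝ) : ℂ) ∈ ball (0:ℂ) r := by
    rw [mem_ball, dist_zero_right]
    simp only [Complex.norm_real, Real.norm_eq_abs, abs_of_pos hc0]
    nlinarith
  have E1 : (∫ θ in (0:ℝ)..(2 * Real.pi), L θ) = 0 := by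
    have h := aux_circle_stmt7 r hr0 0 h0mem (fun z => Complex.log (1 - z)) hdiff1
    have heq : (∫ θ in (0:ℝ)..(2 * Real.pi), L θ)
        = ∫ θ in (0:ℝ)..(2 * Real.pi),
            (circleMap 0 r θ - 0)⁻¹ * Complex.log (1 - circleMap 0 r θ) * circleMap 0 r θ := by
      refine intervalIntegral.integral_congr fun θ _ => ?_
      rw [sub_zero, mul_comm ((circleMap 0 r θ)⁻¹) _, mul_assoc,
        inv_mul_cancel₀ (hz0 θ), mul_one]
    rw [heq, h]
    simp [Complex.log_one]
  have E2 : (∫ θ in (0:ℝ)..(2 * Real.pi), L θ * B θ) = 0 := by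
    have h := aux_circle_stmt7 r hr0 0 h0mem
      (fun z => Complex.log (1 - z) * (1 - z)⁻¹) hdiff2
    have heq : (∫ θ in (0:ℝ)..(2 * Real.pi), L θ * B θ)
        = ∫ θ in (0:ℝ)..(2 * Real.pi),
            (circleMap 0 r θ - 0)⁻¹ *
              (Complex.log (1 - circleMap 0 r θ) * (1 - circleMap 0 r θ)⁻¹) *
              circleMap 0 r θ := by
      refine intervalIntegral.integral_congr fun θ _ => ?_
      rw [sub_zero, mul_comm ((circleMap 0 r θ)⁻¹) _, mul_assoc,
        inv_mul_cancel₀ (hz0 θ), mul_one]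
    rw [heq, h]
    simp [Complex.log_one]
  have hzc2 : ∀ θ : ℝ, circleMap 0 r θ * (starRingEnd ℂ) (circleMap 0 r θ) = ((c:ℝ):ℂ) := by
    intro θ
    rw [Complex.mul_conj]
    norm_cast
    rw [Complex.normSq_eq_norm_sq, habs θ]
    exact hr2
  have hzsubc : ∀ θ : ℝ, circleMap 0 r θ - ((c:ℝ):ℂ) ≠ 0 := by
    intro θ h
    have : circleMap 0 r θ = ((c:ℝ):ℂ) := sub_eq_zero.mp h
    have h2 : ‖circleMap 0 r θ‖ = c := by
      rw [this]; simp [abs_of_pos hc0]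
    rw [habs θ] at h2
    nlinarith
  have hconj : ∀ θ : ℝ, (starRingEnd ℂ) (B θ)
      = (circleMap 0 r θ - ((c:ℝ):ℂ))⁻¹ * circleMap 0 r θ := by
    intro θ
    rw [hB]
    simp only [map_inv₀, map_sub, map_one]
    have h1 : (1 - (starRingEnd ℂ) (circleMap 0 r θ)) * circleMap 0 r θ
        = circleMap 0 r θ - ((c:ℝ):ℂ) := by
      rw [sub_mul, one_mul, mul_comm, hzc2 θ]
    have hne1 : (1 - (starRingEnd ℂ) (circleMap 0 r θ)) ≠ 0 := by
      intro h
      apply hne θ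
      have h2 := congrArg (starRingEnd ℂ) h
      simpa using h2
    field_simp [hne1, hzsubc θ]
    linear_combination hzc2 θ
  have E3 : (∫ θ in (0:ℝ)..(2 * Real.pi), L θ * (starRingEnd ℂ) (B θ))
      = 2 * Real.pi * Complex.log (1 - ((c:ℝ):ℂ)) := by
    have h := aux_circle_stmt7 r hr0 ((c:ℝ):ℂ) hcmem (fun z => Complex.log (1 - z)) hdiff1
    have heq : (∫ θ in (0:ℝ)..(2 * Real.pi), L θ * (starRingEnd ℂ) (B θ))
        = ∫ θ in (0:ℝ)..(2 * Real.pi),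
            (circleMap 0 r θ - ((c:ℝ):ℂ))⁻¹ * Complex.log (1 - circleMap 0 r θ) *
              circleMap 0 r θ := by
      refine intervalIntegral.integral_congr fun θ _ => ?_
      rw [hconj θ, hL]
      ring
    rw [heq, h]
  -- assemble
  have hsplit : (∫ θ in (0:ℝ)..(2 * Real.pi), G θ)
      = 2 * (∫ θ in (0:ℝ)..(2 * Real.pi), L θ)
        - (∫ θ in (0:ℝ)..(2 * Real.pi), L θ * B θ)
        - (∫ θ in (0:ℝ)..(2 * Real.pi), L θ * (starRingEnd ℂ) (B θ)) := by
    rw [← intervalIntegral.integral_const_mul, ← intervalIntegral.integral_sub (f := fun θ => 2 * L θ)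
      ((continuous_const.mul hLc).intervalIntegrable _ _) (hLBc.intervalIntegrable _ _),
      ← intervalIntegral.integral_sub (f := fun θ => 2 * L θ - L θ * B θ)
      (((continuous_const.mul hLc).sub hLBc).intervalIntegrable _ _)
      (hLBbc.intervalIntegrable _ _)]
  have hlogc : Complex.log (1 - ((c:ℝ):ℂ)) = ((Real.log (1 - c) : ℝ) : ℂ) := by
    rw [show (1 : ℂ) - ((c:ℝ):ℂ) = (((1 - c : ℝ)):ℂ) by push_cast; ring]
    exact (Complex.ofReal_log (by linarith)).symm
  rw [hsplit, E1, E2, E3, hlogc]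
  simp [Complex.ofReal_re]
end
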